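/- Let ω₁, ω₂, τ ∈ ℝ with ω₁τ, ω₂τ ∈ (0, π) and ω₁ ≠ ω₂ (mod 2π/τ, i.e., cos(ω₁τ) ≠ cos(ω₂τ)). Then for p ≥ 4 the p×4 matrix V with rows (cos(jω₁τ), sin(jω₁τ), cos(jω₂τ), sin(jω₂τ)), j = 0, …, p-1, has rank 4. -/

import Mathlib

open Real Matrix

private lemma cos_three_mul' (x : ℝ) :
    Real.cos (3 * x) = Real.cos x ^ 3 - 3 * Real.cos x * Real.sin x ^ 2 := by
  rw [show (3 : ℝ) * x = 2 * x + x by ring, Real.cos_add, Real.cos_two_mul',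
    Real.sin_two_mul]
  ring

private lemma sin_three_mul' (x : ℝ) :
    Real.sin (3 * x) = 3 * Real.cos x ^ 2 * Real.sin x - Real.sin x ^ 3 := by
  rw [show (3 : ℝ) * x = 2 * x + x by ring, Real.sin_add, Real.cos_two_mul',
    Real.sin_two_mul]
  ring

theorem stmt_9 (ω₁ ω₂ τ : ℝ) (p : ℕ) (hp : 4 ≤ p)
    (h₁ : ω₁ * τ ∈ Set.Ioo 0 π) (h₂ : ω₂ * τ ∈ Set.Ioo 0 π)
    (hcc : Real.cos (ω₁ * τ) ≠ Real.cos (ω₂ * τ))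
    (V : Matrix (Fin p) (Fin 4) ℝ)
    (hV : ∀ j : Fin p, ∀ i : Fin 4,
      V j i = ![Real.cos ((j : ℕ) * ω₁ * τ), Real.sin ((j : ℕ) * ω₁ * τ),
                Real.cos ((j : ℕ) * ω₂ * τ), Real.sin ((j : ℕ) * ω₂ * τ)] i) :
    V.rank = 4 := by
  set c₁ := Real.cos (ω₁ * τ) with hc₁
  set s₁ := Real.sin (ω₁ * τ) with hs₁
  set c₂ := Real.cos (ω₂ * τ) with hc₂
  set s₂ := Real.sin (ω₂ * τ) with hs₂
  have hs₁pos : 0 < s₁ := Real.sin_pos_of_pos_of_lt_pi h₁.1 h₁.2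
  have hs₂pos : 0 < s₂ := Real.sin_pos_of_pos_of_lt_pi h₂.1 h₂.2
  have hcne : c₁ - c₂ ≠ 0 := sub_ne_zero.mpr hcc
  -- the 4×4 submatrix of the first four rows
  set W : Matrix (Fin 4) (Fin 4) ℝ :=
    fun i j => V (Fin.castLE hp i) j with hW
  -- determinant of W
  have hdet : W.det =
      s₁ * s₂ * ((c₁ - c₂) ^ 2 + (s₂ - s₁) ^ 2) * ((c₁ - c₂) ^ 2 + (s₁ + s₂) ^ 2) := by
    have harg1 : ∀ i : Fin 4, ((Fin.castLE hp i : Fin p) : ℕ) = (i : ℕ) := fun i => rfl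
    rw [Matrix.det_succ_row_zero]
    simp only [Fin.sum_univ_succ, Finset.univ_eq_empty, Finset.sum_empty,
      Matrix.det_fin_three, Matrix.submatrix_apply]
    simp only [hW, hV, harg1]
    norm_num [Fin.succAbove, Fin.lt_def]
    simp only [Matrix.cons_val, show (Fin.castSucc (2 : Fin 3) : Fin 4) = 2 from rfl]
    rw [show ((2 : ℝ) * ω₁ * τ) = 2 * (ω₁ * τ) by ring,
        show ((2 : ℝ) * ω₂ * τ) = 2 * (ω₂ * τ) by ring,
        show ((3 : ℝ) * ω₁ * τ) = 3 * (ω₁ * τ) by ring,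
        show ((3 : ℝ) * ω₂ * τ) = 3 * (ω₂ * τ) by ring,
        Real.cos_two_mul', Real.cos_two_mul', Real.sin_two_mul, Real.sin_two_mul,
        cos_three_mul', cos_three_mul', sin_three_mul', sin_three_mul']
    ring
  have hdet_ne : W.det ≠ 0 := by
    have h3 : 0 < (c₁ - c₂) ^ 2 + (s₂ - s₁) ^ 2 := by
      have : 0 < (c₁ - c₂) ^ 2 :=
        lt_of_le_of_ne (sq_nonneg _) (Ne.symm (pow_ne_zero 2 hcne))
      nlinarith [sq_nonneg (s₂ - s₁)]
    have h4 : 0 < (c₁ - c₂) ^ 2 + (s₁ + s₂) ^ 2 := by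
      have : 0 < (c₁ - c₂) ^ 2 :=
        lt_of_le_of_ne (sq_nonneg _) (Ne.symm (pow_ne_zero 2 hcne))
      nlinarith [sq_nonneg (s₁ + s₂)]
    rw [hdet]
    positivity
  -- W is a unit, so it has rank 4
  have hWrank : W.rank = 4 := by
    rw [Matrix.rank_of_isUnit W ((Matrix.isUnit_iff_isUnit_det W).mpr
      (isUnit_iff_ne_zero.mpr hdet_ne))]
    simp
  -- W = E * V for a selection matrix E, so rank V ≥ rank W
  set E : Matrix (Fin 4) (Fin p) ℝ :=
    fun i k => if k = Fin.castLE hp i then 1 else 0 with hE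
  have hEV : E * V = W := by
    ext i j
    rw [Matrix.mul_apply]
    simp [hE, hW, ite_mul]
  have hle : (4 : ℕ) ≤ V.rank := by
    calc (4 : ℕ) = W.rank := hWrank.symm
    _ = (E * V).rank := by rw [hEV]
    _ ≤ V.rank := Matrix.rank_mul_le_right E V
  have hge : V.rank ≤ 4 := by
    have := Matrix.rank_le_card_width V
    simpa using this
  omega
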